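/- Let λ1 > 0, λ2 > 0, a > 0, b > 0 be real, let x be real with 0 < x < 1, and suppose D_x(x) := b(x)² − 4·a(x)·c(x) < 0, where a(x) = λ2·x·(λ1(x−1) − 1), b(x) = x·(λ1+λ2+λ1λ2+a+b) − a − λ1(1+λ2)·x², c(x) = −b·x. Then every complex root y of a(x)y² + b(x)y + c(x) = 0 satisfies ‖y‖² = b/(λ2·(1+λ1−λ1·x)) and Re(y) = (x·(λ1+λ2+λ1λ2+a+b) − a − λ1(1+λ2)·x²)/(2·λ2·x·(1+λ1−λ1·x)). Moreover the map x ↦ b/(λ2·(1+λ1−λ1·x)) is strictly increasing on [0,1], so if in addition x ≤ x₂ for some x₂ ∈ (0,1], then ‖y‖² ≤ b/(λ2·(1+λ1−λ1·x₂)). -/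

import Mathlib

theorem quad_root (A B C : ℝ) (hA : A ≠ 0) (hD : B ^ 2 - 4 * A * C < 0)
    (y : ℂ) (h : (A : ℂ) * y ^ 2 + (B : ℂ) * y + (C : ℂ) = 0) :
    Complex.normSq y = C / A ∧ y.re = -B / (2 * A) := by
  have hconj : (A : ℂ) * (starRingEnd ℂ y) ^ 2 + (B : ℂ) * (starRingEnd ℂ y) + (C : ℂ) = 0 := by
    have := congrArg (starRingEnd ℂ) h
    simpa [map_add, map_mul, map_pow] using this
  have hfac : (y - starRingEnd ℂ y) * ((A : ℂ) * (y + starRingEnd ℂ y) + (B : ℂ)) = 0 := by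
    have := sub_eq_zero.mpr (h.trans hconj.symm)
    linear_combination this
  rcases mul_eq_zero.mp hfac with h1 | h2
  · -- y is real: contradiction
    exfalso
    have hy : y = (y.re : ℂ) := (Complex.conj_eq_iff_re.mp (sub_eq_zero.mp h1).symm).symm
    set r := y.re
    have hreal : A * r ^ 2 + B * r + C = 0 := by
      have := h
      rw [hy] at this
      exact_mod_cast this
    have h4 : (2 * A * r + B) ^ 2 = B ^ 2 - 4 * A * C := by linear_combination 4 * A * hreal
    nlinarith [sq_nonneg (2 * A * r + B)]
  · have hsum : y + starRingEnd ℂ y = (2 * y.re : ℝ) := by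
      rw [Complex.add_conj]
    have hre : 2 * A * y.re + B = 0 := by
      have h3 : (A : ℂ) * ((2 * y.re : ℝ) : ℂ) + (B : ℂ) = 0 := by rw [← hsum]; exact h2
      have h4 : A * (2 * y.re) + B = 0 := by exact_mod_cast h3
      linarith
    have hAc : (A : ℂ) ≠ 0 := Complex.ofReal_ne_zero.mpr hA
    have hconjy : starRingEnd ℂ y = -(B : ℂ) / A - y := by
      field_simp at h2 ⊢
      linear_combination h2
    have hns : ((Complex.normSq y : ℝ) : ℂ) = (C / A : ℝ) := by
      rw [← Complex.mul_conj, hconjy]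
      push_cast
      field_simp
      linear_combination -h
    constructor
    · exact_mod_cast hns
    · have := hre
      field_simp
      linarith




/-- Lemma 3, part 2: for `x` in the branch cut (where `D_x(x) < 0`), the complex
roots `y` of the kernel quadratic satisfy `‖y‖² = b/(λ2(1+λ1−λ1 x))` and the
stated formula for `Re(y)`; moreover `x ↦ b/(λ2(1+λ1−λ1 x))` is strictly
increasing on `[0,1]`, hence `‖y‖² ≤ b/(λ2(1+λ1−λ1 x₂))` whenever `x ≤ x₂`. -/
theorem contour_L (l1 l2 a b : ℝ)
    (hl1 : 0 < l1) (hl2 : 0 < l2) (ha : 0 < a) (hb : 0 < b)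
    (x : ℝ) (hx0 : 0 < x) (hx1 : x < 1)
    (hD : (x * (l1 + l2 + l1 * l2 + a + b) - a - l1 * (1 + l2) * x ^ 2) ^ 2 -
        4 * (l2 * x * (l1 * (x - 1) - 1)) * (-b * x) < 0) :
    (∀ y : ℂ,
      ((l2 * x * (l1 * (x - 1) - 1) : ℝ) : ℂ) * y ^ 2 +
        ((x * (l1 + l2 + l1 * l2 + a + b) - a - l1 * (1 + l2) * x ^ 2 : ℝ) : ℂ) * y +
        ((-b * x : ℝ) : ℂ) = 0 →
      ‖y‖ ^ 2 = b / (l2 * (1 + l1 - l1 * x)) ∧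
      y.re = (x * (l1 + l2 + l1 * l2 + a + b) - a - l1 * (1 + l2) * x ^ 2) /
        (2 * l2 * x * (1 + l1 - l1 * x))) ∧
    StrictMonoOn (fun t : ℝ => b / (l2 * (1 + l1 - l1 * t))) (Set.Icc 0 1) ∧
    (∀ x2 : ℝ, x2 ∈ Set.Ioc (0 : ℝ) 1 → x ≤ x2 →
      ∀ y : ℂ,
        ((l2 * x * (l1 * (x - 1) - 1) : ℝ) : ℂ) * y ^ 2 +
          ((x * (l1 + l2 + l1 * l2 + a + b) - a - l1 * (1 + l2) * x ^ 2 : ℝ) : ℂ) * y +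
          ((-b * x : ℝ) : ℂ) = 0 →
        ‖y‖ ^ 2 ≤ b / (l2 * (1 + l1 - l1 * x2))) := by
  have hAneg : l2 * x * (l1 * (x - 1) - 1) < 0 := by
    have h1 : l1 * (x - 1) < 0 := mul_neg_of_pos_of_neg hl1 (by linarith)
    exact mul_neg_of_pos_of_neg (mul_pos hl2 hx0) (by linarith)
  have hAne : l2 * x * (l1 * (x - 1) - 1) ≠ 0 := ne_of_lt hAneg
  have hdpos : ∀ t : ℝ, t ≤ 1 → 0 < l2 * (1 + l1 - l1 * t) := by
    intro t ht
    have h1 : 0 ≤ l1 * (1 - t) := mul_nonneg hl1.le (by linarith)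
    nlinarith
  have hmain : ∀ y : ℂ,
      ((l2 * x * (l1 * (x - 1) - 1) : ℝ) : ℂ) * y ^ 2 +
        ((x * (l1 + l2 + l1 * l2 + a + b) - a - l1 * (1 + l2) * x ^ 2 : ℝ) : ℂ) * y +
        ((-b * x : ℝ) : ℂ) = 0 →
      ‖y‖ ^ 2 = b / (l2 * (1 + l1 - l1 * x)) ∧
      y.re = (x * (l1 + l2 + l1 * l2 + a + b) - a - l1 * (1 + l2) * x ^ 2) /
        (2 * l2 * x * (1 + l1 - l1 * x)) := by
    intro y hy
    obtain ⟨hns, hre⟩ := quad_root _ _ _ hAne hD y hy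
    have hd := hdpos x hx1.le
    constructor
    · have h2 : ‖y‖ ^ 2 = Complex.normSq y := by
        rw [Complex.sq_norm]
      rw [h2, hns]
      field_simp
      rw [← div_neg]; congr 1; ring
    · have hd2 : (2 : ℝ) * (l2 * x * (l1 * (x - 1) - 1)) ≠ 0 := by
        intro h; apply hAne; linarith
      have hd3 : 2 * l2 * x * (1 + l1 - l1 * x) ≠ 0 := by
        have h5 : 0 < 2 * l2 * x * (1 + l1 - l1 * x) := by
          nlinarith [mul_pos hx0 (hdpos x hx1.le)]
        exact ne_of_gt h5
      rw [hre, div_eq_div_iff hd2 hd3]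
      ring
  refine ⟨hmain, ?_, ?_⟩
  · intro s hs t ht hst
    simp only
    have hds := hdpos s hs.2
    have hdt := hdpos t ht.2
    apply div_lt_div_of_pos_left hb hdt
    nlinarith [mul_pos hl2 hl1]
  · intro x2 hx2 hle y hy
    rw [(hmain y hy).1]
    rcases lt_or_eq_of_le hle with h | h
    · have hds := hdpos x hx1.le
      have hdt := hdpos x2 hx2.2
      exact le_of_lt (div_lt_div_of_pos_left hb hdt (by nlinarith [mul_pos hl2 hl1]))
    · rw [h]
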